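/- The half-coproducts Δ_≺ and Δ_≻ on WQSym_+ satisfy the codendriform axioms (the duals of the dendriform axioms): as linear maps WQSym_+ → WQSym_+ ⊗ WQSym_+ ⊗ WQSym_+, (Δ_≺ ⊗ id) ∘ Δ_≺ = (id ⊗ (Δ_≺ + Δ_≻)) ∘ Δ_≺, (Δ_≻ ⊗ id) ∘ Δ_≺ = (id ⊗ Δ_≺) ∘ Δ_≻, and ((Δ_≺ + Δ_≻) ⊗ id) ∘ Δ_≻ = (id ⊗ Δ_≻) ∘ Δ_≻. In particular Δ̃ := Δ_≺ + Δ_≻ is coassociative. -/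

import Mathlib

open scoped TensorProduct Classical

/-- The maximum letter of a word, with `wmax [] = 0`. -/
def wmax (w : List ℕ) : ℕ := w.foldr max 0

/-- A word over the positive integers is packed if every letter from `1` to its maximum
occurs in it. -/
def IsPacked (w : List ℕ) : Prop :=
  (∀ x ∈ w, 0 < x) ∧ ∀ i : ℕ, 0 < i → i ≤ wmax w → i ∈ w

/-- `pack w` replaces every occurrence of the `i`-th smallest distinct letter of `w` by `i`. -/
def pack (w : List ℕ) : List ℕ :=
  w.map (fun a => (w.dedup.filter (fun b => b < a)).length + 1)

/-- The ambient free `ℚ`-vector space on all words. -/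
abbrev V : Type := List ℕ →₀ ℚ

noncomputable instance : Zero (V ⊗[ℚ] V) :=
  (inferInstance : AddZeroClass (V ⊗[ℚ] V)).toZero

/-- The basis element `R_w`. -/
noncomputable def Rw (w : List ℕ) : V := Finsupp.single w 1

/-- `WQSym₊`: the span of the `R_w` over nonempty packed words `w`. -/
noncomputable def Wplus : Submodule ℚ V :=
  Submodule.span ℚ {x : V | ∃ w : List ℕ, IsPacked w ∧ w ≠ [] ∧ x = Rw w}

/-- A valid cut for `Δ_≺` at position `i`: `1 ≤ i ≤ |w| - 1`, the letter sets of the two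
factors are disjoint, and all occurrences of the maximum letter lie in the first `i`
positions. -/
def okL (w : List ℕ) (i : ℕ) : Prop :=
  1 ≤ i ∧ i < w.length ∧ (∀ a ∈ w.take i, a ∉ w.drop i) ∧ wmax w ∉ w.drop i

/-- A valid cut for `Δ_≻` at position `i`: `1 ≤ i ≤ |w| - 1`, the letter sets of the two
factors are disjoint, and all occurrences of the maximum letter lie in the last `n - i`
positions. -/
def okR (w : List ℕ) (i : ℕ) : Prop :=
  1 ≤ i ∧ i < w.length ∧ (∀ a ∈ w.take i, a ∉ w.drop i) ∧ wmax w ∉ w.take i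

noncomputable def cutsL (w : List ℕ) : V ⊗[ℚ] V :=
  ((((List.range w.length).filter (fun i => decide (okL w i))).map
    (fun i => Rw (pack (w.take i)) ⊗ₜ[ℚ] Rw (pack (w.drop i)))) : List (V ⊗[ℚ] V)).sum

noncomputable def cutsR (w : List ℕ) : V ⊗[ℚ] V :=
  ((((List.range w.length).filter (fun i => decide (okR w i))).map
    (fun i => Rw (pack (w.take i)) ⊗ₜ[ℚ] Rw (pack (w.drop i)))) : List (V ⊗[ℚ] V)).sum

/-- The left half-coproduct `Δ_≺` of `WQSym₊`. -/
noncomputable def deltaL : V →ₗ[ℚ] V ⊗[ℚ] V :=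
  Finsupp.lsum ℚ fun w => LinearMap.toSpanSingleton ℚ (V ⊗[ℚ] V) (cutsL w)

/-- The right half-coproduct `Δ_≻` of `WQSym₊`. -/
noncomputable def deltaR : V →ₗ[ℚ] V ⊗[ℚ] V :=
  Finsupp.lsum ℚ fun w => LinearMap.toSpanSingleton ℚ (V ⊗[ℚ] V) (cutsR w)


set_option maxHeartbeats 1000000
set_option synthInstance.maxHeartbeats 400000

/-! ### wmax lemmas -/

lemma le_wmax {x : ℕ} {l : List ℕ} (h : x ∈ l) : x ≤ wmax l := by
  induction l with
  | nil => simp at h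
  | cons a t ih =>
    rcases List.mem_cons.1 h with h | h
    · subst h; exact le_max_left _ _
    · exact le_trans (ih h) (le_max_right _ _)

lemma wmax_mem {l : List ℕ} (h : l ≠ []) : wmax l ∈ l := by
  induction l with
  | nil => simp at h
  | cons a t ih =>
    by_cases ht : t = []
    · subst ht; simp [wmax]
    · have hm : wmax (a :: t) = max a (wmax t) := rfl
      rcases le_total a (wmax t) with h1 | h1
      · rw [hm, max_eq_right h1]; exact List.mem_cons_of_mem _ (ih ht)
      · rw [hm, max_eq_left h1]; exact List.mem_cons_self

lemma wmax_append (s t : List ℕ) : wmax (s ++ t) = max (wmax s) (wmax t) := by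
  induction s with
  | nil => simp [wmax]
  | cons a s ih =>
    simp only [List.cons_append, wmax, List.foldr_cons] at *
    rw [ih, max_assoc]

lemma wmax_left {s t : List ℕ} (h : wmax (s ++ t) ∉ t) :
    wmax s = wmax (s ++ t) := by
  rw [wmax_append]
  rcases le_total (wmax t) (wmax s) with h1 | h1
  · rw [max_eq_left h1]
  · by_cases ht : t = []
    · subst ht; simp [wmax]
    · exact absurd (by rw [wmax_append, max_eq_right h1]; exact wmax_mem ht) h

lemma wmax_right {s t : List ℕ} (h : wmax (s ++ t) ∉ s) :
    wmax t = wmax (s ++ t) := by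
  rw [wmax_append]
  rcases le_total (wmax s) (wmax t) with h1 | h1
  · rw [max_eq_right h1]
  · by_cases hs : s = []
    · subst hs; simp [wmax]
    · exact absurd (by rw [wmax_append, max_eq_left h1]; exact wmax_mem hs) h

lemma wmax_le {x : ℕ} {l : List ℕ} (h : ∀ y ∈ l, y ≤ x) : wmax l ≤ x := by
  induction l with
  | nil => exact Nat.zero_le x
  | cons a t ih =>
    exact max_le (h a List.mem_cons_self) (ih fun y hy => h y (List.mem_cons_of_mem _ hy))

lemma wmax_eq_of {x : ℕ} {l : List ℕ} (hx : x ∈ l) (h : ∀ y ∈ l, y ≤ x) : wmax l = x :=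
  le_antisymm (wmax_le h) (le_wmax hx)

/-! ### pack machinery -/

lemma filter_len_eq_card (u : List ℕ) (a : ℕ) :
    (u.dedup.filter (fun b => b < a)).length = (u.toFinset.filter (· < a)).card := by
  rw [← List.toFinset_card_of_nodup (u.nodup_dedup.filter _)]
  congr 1
  ext x
  simp [List.mem_filter, List.mem_dedup, List.mem_toFinset]

lemma gval_lt_gval {u : List ℕ} {a b : ℕ} (ha : a ∈ u) (hab : a < b) :
    (u.toFinset.filter (· < a)).card < (u.toFinset.filter (· < b)).card := by
  apply Finset.card_lt_card
  constructor
  · intro x hx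
    simp only [Finset.mem_filter] at *
    exact ⟨hx.1, lt_trans hx.2 hab⟩
  · intro hsub
    have := hsub (Finset.mem_filter.2 ⟨List.mem_toFinset.2 ha, hab⟩)
    exact absurd this (by simp)

lemma gval_mono {u : List ℕ} {a b : ℕ} (hab : a ≤ b) :
    (u.toFinset.filter (· < a)).card ≤ (u.toFinset.filter (· < b)).card := by
  apply Finset.card_le_card
  intro x hx
  simp only [Finset.mem_filter] at *
  exact ⟨hx.1, lt_of_lt_of_le hx.2 hab⟩

lemma gval_lt_iff {u : List ℕ} {a b : ℕ} (ha : a ∈ u) :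
    a < b ↔ (u.toFinset.filter (· < a)).card < (u.toFinset.filter (· < b)).card := by
  constructor
  · exact fun h => gval_lt_gval ha h
  · intro h
    by_contra hc
    exact absurd (gval_mono (not_lt.1 hc)) (not_le.2 h)

lemma toFinset_map' (l : List ℕ) (f : ℕ → ℕ) : (l.map f).toFinset = l.toFinset.image f := by
  ext x; simp

lemma pack_map {u : List ℕ} {φ : ℕ → ℕ}
    (h : ∀ a ∈ u, ∀ b ∈ u, (a < b ↔ φ a < φ b)) : pack (u.map φ) = pack u := by
  unfold pack
  rw [List.map_map]
  apply List.map_congr_left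
  intro a ha
  simp only [Function.comp_apply]
  rw [filter_len_eq_card, filter_len_eq_card]
  have hinj : Set.InjOn φ ↑u.toFinset := by
    intro x hx y hy hxy
    simp only [Finset.coe_sort_coe, List.coe_toFinset, Set.mem_setOf_eq] at hx hy
    by_contra hne
    rcases lt_or_gt_of_ne hne with hlt | hlt
    · exact absurd hxy (ne_of_lt ((h x hx y hy).1 hlt))
    · exact absurd hxy.symm (ne_of_lt ((h y hy x hx).1 hlt))
  congr 1
  rw [toFinset_map', Finset.filter_image]
  rw [show Finset.filter (fun x => φ x < φ a) u.toFinset = Finset.filter (· < a) u.toFinset from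
    Finset.filter_congr (fun x hx => (h x (List.mem_toFinset.1 hx) a ha).symm)]
  exact Finset.card_image_of_injOn (hinj.mono (by
    exact_mod_cast Finset.filter_subset _ _))

def gfun (u : List ℕ) (a : ℕ) : ℕ := (u.dedup.filter (fun b => b < a)).length + 1

lemma pack_eq_map (u : List ℕ) : pack u = u.map (gfun u) := rfl

lemma gfun_iff {u : List ℕ} {a b : ℕ} (ha : a ∈ u) (_hb : b ∈ u) :
    a < b ↔ gfun u a < gfun u b := by
  unfold gfun
  rw [filter_len_eq_card, filter_len_eq_card]
  constructor
  · intro h; exact Nat.add_lt_add_right ((gval_lt_iff ha).1 h) 1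
  · intro h; exact (gval_lt_iff ha).2 (by omega)

lemma gfun_mono {u : List ℕ} {a b : ℕ} (ha : a ∈ u) (hb : b ∈ u) (hab : a ≤ b) :
    gfun u a ≤ gfun u b := by
  rcases eq_or_lt_of_le hab with rfl | h
  · exact le_rfl
  · exact le_of_lt ((gfun_iff ha hb).1 h)

lemma mem_map_gfun {u l : List ℕ} {b : ℕ} (hb : b ∈ u) (hl : ∀ x ∈ l, x ∈ u) :
    gfun u b ∈ l.map (gfun u) ↔ b ∈ l := by
  simp only [List.mem_map]
  constructor
  · rintro ⟨c, hc, hcb⟩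
    have : c = b := by
      by_contra hne
      rcases lt_or_gt_of_ne hne with hlt | hlt
      · exact absurd hcb (ne_of_lt ((gfun_iff (hl c hc) hb).1 hlt))
      · exact absurd hcb.symm (ne_of_lt ((gfun_iff hb (hl c hc)).1 hlt))
    exact this ▸ hc
  · exact fun h => ⟨b, h, rfl⟩

lemma wmax_pack {u : List ℕ} (hu : u ≠ []) : wmax (pack u) = gfun u (wmax u) := by
  apply wmax_eq_of
  · rw [pack_eq_map]
    exact List.mem_map.2 ⟨wmax u, wmax_mem hu, rfl⟩
  · intro y hy
    rw [pack_eq_map] at hy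
    rcases List.mem_map.1 hy with ⟨c, hc, rfl⟩
    exact gfun_mono hc (wmax_mem hu) (le_wmax hc)

lemma okL_pack (u : List ℕ) (i : ℕ) : okL (pack u) i ↔ okL u i := by
  by_cases hu : u = []
  · subst hu; simp [okL, pack]
  unfold okL
  rw [wmax_pack hu, pack_eq_map, List.length_map, ← List.map_take, ← List.map_drop]
  constructor
  · rintro ⟨h1, h2, h3, h4⟩
    refine ⟨h1, h2, ?_, ?_⟩
    · intro a ha hd
      exact h3 (gfun u a) (List.mem_map.2 ⟨a, ha, rfl⟩)
        ((mem_map_gfun (List.take_subset i u ha) (fun x hx => List.drop_subset i u hx)).2 hd)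
    · exact fun hd => h4 ((mem_map_gfun (wmax_mem hu) (fun x hx => List.drop_subset i u hx)).2 hd)
  · rintro ⟨h1, h2, h3, h4⟩
    refine ⟨h1, h2, ?_, ?_⟩
    · intro a ha hd
      rcases List.mem_map.1 ha with ⟨c, hc, rfl⟩
      exact h3 c hc ((mem_map_gfun (List.take_subset i u hc) (fun x hx => List.drop_subset i u hx)).1 hd)
    · exact fun hd => h4 ((mem_map_gfun (wmax_mem hu) (fun x hx => List.drop_subset i u hx)).1 hd)

lemma okR_pack (u : List ℕ) (i : ℕ) : okR (pack u) i ↔ okR u i := by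
  by_cases hu : u = []
  · subst hu; simp [okR, pack]
  unfold okR
  rw [wmax_pack hu, pack_eq_map, List.length_map, ← List.map_take, ← List.map_drop]
  constructor
  · rintro ⟨h1, h2, h3, h4⟩
    refine ⟨h1, h2, ?_, ?_⟩
    · intro a ha hd
      exact h3 (gfun u a) (List.mem_map.2 ⟨a, ha, rfl⟩)
        ((mem_map_gfun (List.take_subset i u ha) (fun x hx => List.drop_subset i u hx)).2 hd)
    · exact fun hd => h4 ((mem_map_gfun (wmax_mem hu) (fun x hx => List.take_subset i u hx)).2 hd)
  · rintro ⟨h1, h2, h3, h4⟩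
    refine ⟨h1, h2, ?_, ?_⟩
    · intro a ha hd
      rcases List.mem_map.1 ha with ⟨c, hc, rfl⟩
      exact h3 c hc ((mem_map_gfun (List.take_subset i u hc) (fun x hx => List.drop_subset i u hx)).1 hd)
    · exact fun hd => h4 ((mem_map_gfun (wmax_mem hu) (fun x hx => List.take_subset i u hx)).1 hd)

lemma pack_take_pack (u : List ℕ) (i : ℕ) : pack ((pack u).take i) = pack (u.take i) := by
  rw [pack_eq_map u, ← List.map_take]
  exact pack_map (fun a ha b hb =>
    gfun_iff (List.take_subset i u ha) (List.take_subset i u hb))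

lemma pack_drop_pack (u : List ℕ) (i : ℕ) : pack ((pack u).drop i) = pack (u.drop i) := by
  rw [pack_eq_map u, ← List.map_drop]
  exact pack_map (fun a ha b hb =>
    gfun_iff (List.drop_subset i u ha) (List.drop_subset i u hb))

lemma pack_length (u : List ℕ) : (pack u).length = u.length := List.length_map _

/-! ### decompositions and condition equivalences -/

def Dis (s t : List ℕ) : Prop := ∀ x ∈ s, x ∉ t

lemma dis_append_right (s t u : List ℕ) : Dis s (t ++ u) ↔ Dis s t ∧ Dis s u := by
  unfold Dis
  constructor
  · exact fun h => ⟨fun x hx ht => h x hx (List.mem_append_left _ ht),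
      fun x hx hu => h x hx (List.mem_append_right _ hu)⟩
  · rintro ⟨h1, h2⟩ x hx hm
    rcases List.mem_append.1 hm with hm | hm
    exacts [h1 x hx hm, h2 x hx hm]

lemma dis_append_left (s t u : List ℕ) : Dis (s ++ t) u ↔ Dis s u ∧ Dis t u := by
  unfold Dis
  constructor
  · exact fun h => ⟨fun x hx => h x (List.mem_append_left _ hx),
      fun x hx => h x (List.mem_append_right _ hx)⟩
  · rintro ⟨h1, h2⟩ x hx
    rcases List.mem_append.1 hx with hx | hx
    exacts [h1 x hx, h2 x hx]

lemma take_take_eq (w : List ℕ) {i j : ℕ} (hij : i ≤ j) : (w.take j).take i = w.take i := by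
  rw [List.take_take, min_eq_left hij]

lemma take_decomp (w : List ℕ) {i j : ℕ} (hij : i ≤ j) :
    w.take j = w.take i ++ (w.take j).drop i := by
  rw [← take_take_eq w hij]
  exact (List.take_append_drop i (w.take j)).symm

lemma drop_decomp (w : List ℕ) {i j : ℕ} (hij : i ≤ j) (hjn : j ≤ w.length) :
    w.drop i = (w.take j).drop i ++ w.drop j := by
  conv_lhs => rw [← List.take_append_drop j w]
  rw [List.drop_append_of_le_length (by
    rw [List.length_take]; exact le_min hij (le_trans hij hjn))]

lemma mid_eq (w : List ℕ) (i j : ℕ) : (w.take j).drop i = (w.drop i).take (j - i) :=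
  List.drop_take

lemma drop_drop_eq (w : List ℕ) {i j : ℕ} (hij : i ≤ j) :
    (w.drop i).drop (j - i) = w.drop j := by
  rw [List.drop_drop, Nat.add_sub_cancel' hij]

lemma wmax_take_eq (w : List ℕ) (j : ℕ) (h : wmax w ∉ w.drop j) :
    wmax (w.take j) = wmax w := by
  have := wmax_left (s := w.take j) (t := w.drop j)
    (by rw [List.take_append_drop]; exact h)
  rwa [List.take_append_drop] at this

lemma wmax_drop_eq (w : List ℕ) (i : ℕ) (h : wmax w ∉ w.take i) :
    wmax (w.drop i) = wmax w := by
  have := wmax_right (s := w.take i) (t := w.drop i)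
    (by rw [List.take_append_drop]; exact h)
  rwa [List.take_append_drop] at this

def Can1 (w : List ℕ) (i j : ℕ) : Prop :=
  1 ≤ i ∧ i < j ∧ j < w.length ∧ Dis (w.take i) ((w.take j).drop i) ∧
    Dis (w.take i) (w.drop j) ∧ Dis ((w.take j).drop i) (w.drop j) ∧
    wmax w ∉ (w.take j).drop i ∧ wmax w ∉ w.drop j

def Can2 (w : List ℕ) (i j : ℕ) : Prop :=
  1 ≤ i ∧ i < j ∧ j < w.length ∧ Dis (w.take i) ((w.take j).drop i) ∧
    Dis (w.take i) (w.drop j) ∧ Dis ((w.take j).drop i) (w.drop j) ∧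
    wmax w ∉ w.take i ∧ wmax w ∉ w.drop j

def Can3 (w : List ℕ) (i j : ℕ) : Prop :=
  1 ≤ i ∧ i < j ∧ j < w.length ∧ Dis (w.take i) ((w.take j).drop i) ∧
    Dis (w.take i) (w.drop j) ∧ Dis ((w.take j).drop i) (w.drop j) ∧
    wmax w ∉ w.take i ∧ wmax w ∉ (w.take j).drop i

lemma A1_iff (w : List ℕ) (i j : ℕ) : (okL w j ∧ okL (w.take j) i) ↔ Can1 w i j := by
  constructor
  · rintro ⟨⟨hj1, hjn, hd1, hm1⟩, hi1, hil, hd2, hm2⟩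
    have hij : i < j := lt_of_lt_of_le hil (by rw [List.length_take]; exact min_le_left _ _)
    rw [take_take_eq w hij.le] at hd2
    rw [wmax_take_eq w j hm1] at hm2
    rw [take_decomp w hij.le] at hd1
    obtain ⟨hac, hbc⟩ := (dis_append_left _ _ _).1 hd1
    exact ⟨hi1, hij, hjn, hd2, hac, hbc, hm2, hm1⟩
  · rintro ⟨hi1, hij, hjn, hab, hac, hbc, hMb, hMc⟩
    refine ⟨⟨by omega, hjn, ?_, hMc⟩, hi1, ?_, ?_, ?_⟩
    · rw [take_decomp w hij.le]; exact (dis_append_left _ _ _).2 ⟨hac, hbc⟩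
    · rw [List.length_take]; exact lt_min hij (hij.trans hjn)
    · rw [take_take_eq w hij.le]; exact hab
    · rw [wmax_take_eq w j hMc]; exact hMb

lemma A2_iff (w : List ℕ) (i j : ℕ) : (okL w j ∧ okR (w.take j) i) ↔ Can2 w i j := by
  constructor
  · rintro ⟨⟨hj1, hjn, hd1, hm1⟩, hi1, hil, hd2, hm2⟩
    have hij : i < j := lt_of_lt_of_le hil (by rw [List.length_take]; exact min_le_left _ _)
    rw [take_take_eq w hij.le] at hd2
    rw [wmax_take_eq w j hm1, take_take_eq w hij.le] at hm2
    rw [take_decomp w hij.le] at hd1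
    obtain ⟨hac, hbc⟩ := (dis_append_left _ _ _).1 hd1
    exact ⟨hi1, hij, hjn, hd2, hac, hbc, hm2, hm1⟩
  · rintro ⟨hi1, hij, hjn, hab, hac, hbc, hMa, hMc⟩
    refine ⟨⟨by omega, hjn, ?_, hMc⟩, hi1, ?_, ?_, ?_⟩
    · rw [take_decomp w hij.le]; exact (dis_append_left _ _ _).2 ⟨hac, hbc⟩
    · rw [List.length_take]; exact lt_min hij (hij.trans hjn)
    · rw [take_take_eq w hij.le]; exact hab
    · rw [wmax_take_eq w j hMc, take_take_eq w hij.le]; exact hMa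

lemma A3_iff (w : List ℕ) (i j : ℕ) :
    (okR w j ∧ (okL (w.take j) i ∨ okR (w.take j) i)) ↔ Can3 w i j := by
  constructor
  · rintro ⟨⟨hj1, hjn, hd1, hm1⟩, hQ⟩
    obtain ⟨hi1, hil, hd2⟩ : 1 ≤ i ∧ i < (w.take j).length ∧
        (∀ a ∈ (w.take j).take i, a ∉ (w.take j).drop i) := by
      rcases hQ with ⟨h1, h2, h3, _⟩ | ⟨h1, h2, h3, _⟩ <;> exact ⟨h1, h2, h3⟩
    have hij : i < j := lt_of_lt_of_le hil (by rw [List.length_take]; exact min_le_left _ _)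
    rw [take_take_eq w hij.le] at hd2
    rw [take_decomp w hij.le] at hd1 hm1
    obtain ⟨hac, hbc⟩ := (dis_append_left _ _ _).1 hd1
    have hMa : wmax w ∉ w.take i := fun h => hm1 (List.mem_append_left _ h)
    have hMb : wmax w ∉ (w.take j).drop i := fun h => hm1 (List.mem_append_right _ h)
    exact ⟨hi1, hij, hjn, hd2, hac, hbc, hMa, hMb⟩
  · rintro ⟨hi1, hij, hjn, hab, hac, hbc, hMa, hMb⟩
    have hil : i < (w.take j).length := by
      rw [List.length_take]; exact lt_min hij (hij.trans hjn)
    have hd2 : ∀ a ∈ (w.take j).take i, a ∉ (w.take j).drop i := by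
      rw [take_take_eq w hij.le]; exact hab
    refine ⟨⟨by omega, hjn, ?_, ?_⟩, ?_⟩
    · rw [take_decomp w hij.le]; exact (dis_append_left _ _ _).2 ⟨hac, hbc⟩
    · rw [take_decomp w hij.le]
      intro h
      rcases List.mem_append.1 h with h | h
      exacts [hMa h, hMb h]
    · have htk : w.take j ≠ [] := by
        intro h
        have h2 := congrArg List.length h
        rw [List.length_take] at h2
        simp only [List.length_nil] at h2
        omega
      have hmem : wmax (w.take j) ∈ w.take i ++ (w.take j).drop i := by
        rw [← take_decomp w hij.le]; exact wmax_mem htk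
      rcases List.mem_append.1 hmem with hA | hB
      · exact Or.inl ⟨hi1, hil, hd2, fun hB' => hab _ hA hB'⟩
      · refine Or.inr ⟨hi1, hil, hd2, fun hA' => ?_⟩
        rw [take_take_eq w hij.le] at hA'
        exact hab _ hA' hB

lemma B1_iff (w : List ℕ) (i j : ℕ) :
    (okL w i ∧ (okL (w.drop i) (j - i) ∨ okR (w.drop i) (j - i)) ∧ i < j) ↔ Can1 w i j := by
  constructor
  · rintro ⟨⟨hi1, hin, hd1, hm1⟩, hQ, hij⟩
    obtain ⟨hk1, hkl, hd2⟩ : 1 ≤ j - i ∧ j - i < (w.drop i).length ∧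
        (∀ a ∈ (w.drop i).take (j - i), a ∉ (w.drop i).drop (j - i)) := by
      rcases hQ with ⟨h1, h2, h3, _⟩ | ⟨h1, h2, h3, _⟩ <;> exact ⟨h1, h2, h3⟩
    have hjn : j < w.length := by rw [List.length_drop] at hkl; omega
    rw [drop_decomp w hij.le hjn.le] at hd1 hm1
    obtain ⟨hab, hac⟩ := (dis_append_right _ _ _).1 hd1
    have hMb : wmax w ∉ (w.take j).drop i := fun h => hm1 (List.mem_append_left _ h)
    have hMc : wmax w ∉ w.drop j := fun h => hm1 (List.mem_append_right _ h)
    rw [← mid_eq w i j, drop_drop_eq w hij.le] at hd2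
    exact ⟨hi1, hij, hjn, hab, hac, hd2, hMb, hMc⟩
  · rintro ⟨hi1, hij, hjn, hab, hac, hbc, hMb, hMc⟩
    refine ⟨⟨hi1, hij.trans hjn, ?_, ?_⟩, ?_, hij⟩
    · rw [drop_decomp w hij.le hjn.le]; exact (dis_append_right _ _ _).2 ⟨hab, hac⟩
    · rw [drop_decomp w hij.le hjn.le]
      intro h
      rcases List.mem_append.1 h with h | h
      exacts [hMb h, hMc h]
    · have hne : w.drop i ≠ [] := by
        intro h
        have h2 := congrArg List.length h
        rw [List.length_drop] at h2
        simp only [List.length_nil] at h2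
        omega
      have hk1 : 1 ≤ j - i := by omega
      have hkl : j - i < (w.drop i).length := by rw [List.length_drop]; omega
      have hd2 : ∀ a ∈ (w.drop i).take (j - i), a ∉ (w.drop i).drop (j - i) := by
        rw [← mid_eq w i j, drop_drop_eq w hij.le]; exact hbc
      have hmem : wmax (w.drop i) ∈ (w.take j).drop i ++ w.drop j := by
        rw [← drop_decomp w hij.le hjn.le]; exact wmax_mem hne
      rcases List.mem_append.1 hmem with hB | hC
      · refine Or.inl ⟨hk1, hkl, hd2, ?_⟩
        rw [drop_drop_eq w hij.le]
        exact fun hC' => hbc _ hB hC'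
      · refine Or.inr ⟨hk1, hkl, hd2, ?_⟩
        rw [← mid_eq w i j]
        exact fun hB' => hbc _ hB' hC

lemma B2_iff (w : List ℕ) (i j : ℕ) :
    (okR w i ∧ okL (w.drop i) (j - i) ∧ i < j) ↔ Can2 w i j := by
  constructor
  · rintro ⟨⟨hi1, hin, hd1, hm1⟩, ⟨hk1, hkl, hd2, hmk⟩, hij⟩
    have hjn : j < w.length := by rw [List.length_drop] at hkl; omega
    rw [drop_decomp w hij.le hjn.le] at hd1
    obtain ⟨hab, hac⟩ := (dis_append_right _ _ _).1 hd1
    rw [← mid_eq w i j, drop_drop_eq w hij.le] at hd2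
    rw [wmax_drop_eq w i hm1, drop_drop_eq w hij.le] at hmk
    exact ⟨hi1, hij, hjn, hab, hac, hd2, hm1, hmk⟩
  · rintro ⟨hi1, hij, hjn, hab, hac, hbc, hMa, hMc⟩
    refine ⟨⟨hi1, hij.trans hjn, ?_, hMa⟩, ⟨by omega, ?_, ?_, ?_⟩, hij⟩
    · rw [drop_decomp w hij.le hjn.le]; exact (dis_append_right _ _ _).2 ⟨hab, hac⟩
    · rw [List.length_drop]; omega
    · rw [← mid_eq w i j, drop_drop_eq w hij.le]; exact hbc
    · rw [wmax_drop_eq w i hMa, drop_drop_eq w hij.le]; exact hMc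

lemma B3_iff (w : List ℕ) (i j : ℕ) :
    (okR w i ∧ okR (w.drop i) (j - i) ∧ i < j) ↔ Can3 w i j := by
  constructor
  · rintro ⟨⟨hi1, hin, hd1, hm1⟩, ⟨hk1, hkl, hd2, hmk⟩, hij⟩
    have hjn : j < w.length := by rw [List.length_drop] at hkl; omega
    rw [drop_decomp w hij.le hjn.le] at hd1
    obtain ⟨hab, hac⟩ := (dis_append_right _ _ _).1 hd1
    rw [← mid_eq w i j, drop_drop_eq w hij.le] at hd2
    rw [wmax_drop_eq w i hm1, ← mid_eq w i j] at hmk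
    exact ⟨hi1, hij, hjn, hab, hac, hd2, hm1, hmk⟩
  · rintro ⟨hi1, hij, hjn, hab, hac, hbc, hMa, hMb⟩
    refine ⟨⟨hi1, hij.trans hjn, ?_, hMa⟩, ⟨by omega, ?_, ?_, ?_⟩, hij⟩
    · rw [drop_decomp w hij.le hjn.le]; exact (dis_append_right _ _ _).2 ⟨hab, hac⟩
    · rw [List.length_drop]; omega
    · rw [← mid_eq w i j, drop_drop_eq w hij.le]; exact hbc
    · rw [wmax_drop_eq w i hMa, ← mid_eq w i j]; exact hMb

lemma E1 (w : List ℕ) (i j : ℕ) :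
    (okL w j ∧ okL (w.take j) i) ↔
      (okL w i ∧ (okL (w.drop i) (j - i) ∨ okR (w.drop i) (j - i)) ∧ i < j) :=
  (A1_iff w i j).trans (B1_iff w i j).symm

lemma E2 (w : List ℕ) (i j : ℕ) :
    (okL w j ∧ okR (w.take j) i) ↔ (okR w i ∧ okL (w.drop i) (j - i) ∧ i < j) :=
  (A2_iff w i j).trans (B2_iff w i j).symm

lemma E3 (w : List ℕ) (i j : ℕ) :
    (okR w j ∧ (okL (w.take j) i ∨ okR (w.take j) i)) ↔
      (okR w i ∧ okR (w.drop i) (j - i) ∧ i < j) :=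
  (A3_iff w i j).trans (B3_iff w i j).symm

lemma not_okL_and_okR (u : List ℕ) (i : ℕ) : ¬(okL u i ∧ okR u i) := by
  rintro ⟨⟨h1, h2, _, hL⟩, ⟨_, _, _, hR⟩⟩
  have hu : u ≠ [] := by intro h; subst h; simp at h2
  have hm : wmax u ∈ u.take i ++ u.drop i := by
    rw [List.take_append_drop]; exact wmax_mem hu
  rcases List.mem_append.1 hm with h | h
  exacts [hR h, hL h]

/-! ### sums -/

lemma listsum_filter {M : Type*} [AddCommMonoid M] (n : ℕ) (p : ℕ → Prop) (f : ℕ → M) :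
    ((((List.range n).filter (fun i => decide (p i))).map f).sum) =
      ∑ i ∈ Finset.range n, if p i then f i else 0 := by
  induction n with
  | zero => simp
  | succ n ih =>
    rw [List.range_succ, List.filter_append, List.map_append, List.sum_append,
      Finset.sum_range_succ, ih]
    by_cases h : p n <;> simp [h]

lemma cutsL_sum (w : List ℕ) :
    cutsL w = ∑ i ∈ Finset.range w.length,
      if okL w i then Rw (pack (w.take i)) ⊗ₜ[ℚ] Rw (pack (w.drop i)) else 0 :=
  listsum_filter _ _ _

lemma cutsR_sum (w : List ℕ) :
    cutsR w = ∑ i ∈ Finset.range w.length,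
      if okR w i then Rw (pack (w.take i)) ⊗ₜ[ℚ] Rw (pack (w.drop i)) else 0 :=
  listsum_filter _ _ _

lemma deltaL_Rw (u : List ℕ) : deltaL (Rw u) = cutsL u := by
  simp [deltaL, Rw]

lemma deltaR_Rw (u : List ℕ) : deltaR (Rw u) = cutsR u := by
  simp [deltaR, Rw]

def QLR (u : List ℕ) (i : ℕ) : Prop := okL u i ∨ okR u i

lemma deltaLR_Rw (u : List ℕ) : (deltaL + deltaR) (Rw u) =
    ∑ i ∈ Finset.range u.length,
      if QLR u i then Rw (pack (u.take i)) ⊗ₜ[ℚ] Rw (pack (u.drop i)) else 0 := by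
  unfold QLR
  rw [LinearMap.add_apply, deltaL_Rw, deltaR_Rw, cutsL_sum, cutsR_sum,
    ← Finset.sum_add_distrib]
  refine Finset.sum_congr rfl fun i _ => ?_
  by_cases hL : okL u i
  · rw [if_pos hL, if_neg (fun hR => not_okL_and_okR u i ⟨hL, hR⟩), add_zero,
      if_pos (Or.inl hL)]
  · by_cases hR : okR u i
    · rw [if_neg hL, if_pos hR, zero_add, if_pos (Or.inr hR)]
    · rw [if_neg hL, if_neg hR, add_zero, if_neg (by tauto)]

noncomputable def T3 (w : List ℕ) (i j : ℕ) : V ⊗[ℚ] (V ⊗[ℚ] V) :=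
  Rw (pack (w.take i)) ⊗ₜ[ℚ] (Rw (pack ((w.take j).drop i)) ⊗ₜ[ℚ] Rw (pack (w.drop j)))

lemma compA (w : List ℕ) (P Q : List ℕ → ℕ → Prop) (dQ : V →ₗ[ℚ] V ⊗[ℚ] V)
    (hdQ : ∀ u : List ℕ, dQ (Rw u) = ∑ i ∈ Finset.range u.length,
      if Q u i then Rw (pack (u.take i)) ⊗ₜ[ℚ] Rw (pack (u.drop i)) else 0)
    (hQlen : ∀ u i, Q u i → i < u.length)
    (hQpack : ∀ u i, Q (pack u) i ↔ Q u i) :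
    (TensorProduct.assoc ℚ V V V) ((TensorProduct.map dQ LinearMap.id)
      (∑ j ∈ Finset.range w.length,
        if P w j then Rw (pack (w.take j)) ⊗ₜ[ℚ] Rw (pack (w.drop j)) else 0))
    = ∑ j ∈ Finset.range w.length, ∑ i ∈ Finset.range w.length,
        if P w j ∧ Q (w.take j) i then T3 w i j else 0 := by
  rw [map_sum, map_sum]
  refine Finset.sum_congr rfl fun j hj => ?_
  rw [apply_ite (TensorProduct.map dQ LinearMap.id), map_zero,
    apply_ite (TensorProduct.assoc ℚ V V V), map_zero]
  by_cases hP : P w j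
  · rw [if_pos hP, TensorProduct.map_tmul, LinearMap.id_coe, id_eq, hdQ,
      TensorProduct.sum_tmul, map_sum]
    have hlen : (pack (w.take j)).length = (w.take j).length := pack_length _
    have hjle : (w.take j).length ≤ w.length := by
      rw [List.length_take]; exact min_le_right _ _
    rw [hlen]
    refine (Finset.sum_subset (Finset.range_subset_range.2 hjle) fun i _ hi => ?_).trans
      (Finset.sum_congr rfl fun i _ => ?_)
    · rw [if_neg, TensorProduct.zero_tmul, map_zero]
      intro hQ
      exact hi (Finset.mem_range.2 (hlen ▸ hQlen _ _ hQ))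
    · by_cases hQ : Q (w.take j) i
      · rw [if_pos ((hQpack _ _).2 hQ), if_pos ⟨hP, hQ⟩, TensorProduct.assoc_tmul]
        have hij : i ≤ j := by
          have := hQlen _ _ hQ
          rw [List.length_take] at this
          omega
        rw [pack_take_pack, pack_drop_pack, take_take_eq w hij]
        rfl
      · rw [if_neg (fun hh => hQ ((hQpack _ _).1 hh)), if_neg (fun hh => hQ hh.2),
          TensorProduct.zero_tmul, map_zero]
  · rw [if_neg hP]
    exact (Finset.sum_eq_zero fun i _ => if_neg (fun hh => hP hh.1)).symm

lemma compB (w : List ℕ) (P Q : List ℕ → ℕ → Prop) (dQ : V →ₗ[ℚ] V ⊗[ℚ] V)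
    (hdQ : ∀ u : List ℕ, dQ (Rw u) = ∑ i ∈ Finset.range u.length,
      if Q u i then Rw (pack (u.take i)) ⊗ₜ[ℚ] Rw (pack (u.drop i)) else 0)
    (hQ1 : ∀ u, ¬ Q u 0)
    (hQpack : ∀ u i, Q (pack u) i ↔ Q u i) :
    (TensorProduct.map LinearMap.id dQ)
      (∑ i ∈ Finset.range w.length,
        if P w i then Rw (pack (w.take i)) ⊗ₜ[ℚ] Rw (pack (w.drop i)) else 0)
    = ∑ j ∈ Finset.range w.length, ∑ i ∈ Finset.range w.length,
        if P w i ∧ Q (w.drop i) (j - i) ∧ i < j then T3 w i j else 0 := by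
  rw [map_sum, Finset.sum_comm]
  refine Finset.sum_congr rfl fun i hi => ?_
  rw [apply_ite (TensorProduct.map LinearMap.id dQ), map_zero]
  by_cases hP : P w i
  · rw [if_pos hP, TensorProduct.map_tmul, LinearMap.id_coe, id_eq, hdQ,
      TensorProduct.tmul_sum]
    have hlen : (pack (w.drop i)).length = w.length - i := by
      rw [pack_length, List.length_drop]
    rw [hlen]
    have hre : ∑ k ∈ Finset.range (w.length - i),
        (Rw (pack (w.take i)) ⊗ₜ[ℚ] (if Q (pack (w.drop i)) k then
          Rw (pack ((pack (w.drop i)).take k)) ⊗ₜ[ℚ] Rw (pack ((pack (w.drop i)).drop k))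
          else 0))
        = ∑ j ∈ Finset.Ico i w.length,
        (Rw (pack (w.take i)) ⊗ₜ[ℚ] (if Q (pack (w.drop i)) (j - i) then
          Rw (pack ((pack (w.drop i)).take (j - i))) ⊗ₜ[ℚ]
            Rw (pack ((pack (w.drop i)).drop (j - i))) else 0)) := by
      rw [Finset.sum_Ico_eq_sum_range]
      refine Finset.sum_congr rfl fun k _ => ?_
      congr 2 <;> rw [Nat.add_sub_cancel_left]
    rw [hre]
    refine (Finset.sum_congr rfl fun j hjm => ?_).trans
      (Finset.sum_subset (fun x hx => Finset.mem_range.2 (Finset.mem_Ico.1 hx).2)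
        fun j hjr hj => ?_)
    · obtain ⟨hij, hjn⟩ := Finset.mem_Ico.1 hjm
      by_cases hQ : Q (w.drop i) (j - i)
      · have h1i : 1 ≤ j - i := Nat.one_le_iff_ne_zero.2 (fun h0 => hQ1 _ (h0 ▸ hQ))
        rw [if_pos ((hQpack _ _).2 hQ), if_pos ⟨hP, hQ, by omega⟩, pack_take_pack,
          pack_drop_pack, ← mid_eq w i j, drop_drop_eq w hij]
        rfl
      · rw [if_neg (fun hh => hQ ((hQpack _ _).1 hh)), TensorProduct.tmul_zero,
          if_neg (fun hh => hQ hh.2.1)]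
    · rw [if_neg]
      rintro ⟨-, -, hij⟩
      exact hj (Finset.mem_Ico.2 ⟨hij.le, Finset.mem_range.1 hjr⟩)
  · rw [if_neg hP]
    exact (Finset.sum_eq_zero fun j _ => if_neg (fun hh => hP hh.1)).symm

/-! ### main per-word identities -/

lemma hdL : ∀ u : List ℕ, deltaL (Rw u) = ∑ i ∈ Finset.range u.length,
    if okL u i then Rw (pack (u.take i)) ⊗ₜ[ℚ] Rw (pack (u.drop i)) else 0 :=
  fun u => (deltaL_Rw u).trans (cutsL_sum u)

lemma hdR : ∀ u : List ℕ, deltaR (Rw u) = ∑ i ∈ Finset.range u.length,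
    if okR u i then Rw (pack (u.take i)) ⊗ₜ[ℚ] Rw (pack (u.drop i)) else 0 :=
  fun u => (deltaR_Rw u).trans (cutsR_sum u)

lemma hQLRlen : ∀ (u : List ℕ) (i : ℕ), QLR u i → i < u.length := by
  rintro u i (h | h) <;> exact h.2.1

lemma hQLR0 : ∀ u : List ℕ, ¬ QLR u 0 := by
  rintro u (h | h) <;> exact Nat.not_succ_le_zero 0 h.1

lemma hQLRpack : ∀ (u : List ℕ) (i : ℕ), QLR (pack u) i ↔ QLR u i :=
  fun u i => or_congr (okL_pack u i) (okR_pack u i)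

lemma E1' (w : List ℕ) (i j : ℕ) :
    (okL w j ∧ okL (w.take j) i) ↔ (okL w i ∧ QLR (w.drop i) (j - i) ∧ i < j) := by
  unfold QLR; exact E1 w i j

lemma E3' (w : List ℕ) (i j : ℕ) :
    (okR w j ∧ QLR (w.take j) i) ↔ (okR w i ∧ okR (w.drop i) (j - i) ∧ i < j) := by
  unfold QLR; exact E3 w i j

lemma main1 (w : List ℕ) :
    (TensorProduct.assoc ℚ V V V) ((TensorProduct.map deltaL LinearMap.id) (deltaL (Rw w))) =
      (TensorProduct.map LinearMap.id (deltaL + deltaR)) (deltaL (Rw w)) := by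
  rw [deltaL_Rw, cutsL_sum,
    compA w okL okL deltaL hdL (fun u i h => h.2.1) okL_pack,
    compB w okL QLR (deltaL + deltaR) deltaLR_Rw hQLR0 hQLRpack]
  exact Finset.sum_congr rfl fun j _ => Finset.sum_congr rfl fun i _ =>
    if_congr (E1' w i j) rfl rfl

lemma main2 (w : List ℕ) :
    (TensorProduct.assoc ℚ V V V) ((TensorProduct.map deltaR LinearMap.id) (deltaL (Rw w))) =
      (TensorProduct.map LinearMap.id deltaL) (deltaR (Rw w)) := by
  rw [deltaL_Rw, cutsL_sum, deltaR_Rw, cutsR_sum,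
    compA w okL okR deltaR hdR (fun u i h => h.2.1) okR_pack,
    compB w okR okL deltaL hdL (fun u h => Nat.not_succ_le_zero 0 h.1) okL_pack]
  exact Finset.sum_congr rfl fun j _ => Finset.sum_congr rfl fun i _ =>
    if_congr (E2 w i j) rfl rfl

lemma main3 (w : List ℕ) :
    (TensorProduct.assoc ℚ V V V)
        ((TensorProduct.map (deltaL + deltaR) LinearMap.id) (deltaR (Rw w))) =
      (TensorProduct.map LinearMap.id deltaR) (deltaR (Rw w)) := by
  rw [deltaR_Rw, cutsR_sum,
    compA w okR QLR (deltaL + deltaR) deltaLR_Rw hQLRlen hQLRpack,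
    compB w okR okR deltaR hdR (fun u h => Nat.not_succ_le_zero 0 h.1) okR_pack]
  exact Finset.sum_congr rfl fun j _ => Finset.sum_congr rfl fun i _ =>
    if_congr (E3' w i j) rfl rfl

/-! ### extension to all of V -/

lemma ext_all {F G : V →ₗ[ℚ] V ⊗[ℚ] (V ⊗[ℚ] V)} (h : ∀ u, F (Rw u) = G (Rw u)) (x : V) :
    F x = G x := by
  have hFG : F = G := Finsupp.lhom_ext fun a b => by
    have hb : (Finsupp.single a b : V) = b • Rw a := by
      rw [Rw, Finsupp.smul_single, smul_eq_mul, mul_one]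
    rw [hb, map_smul, map_smul, h]
  rw [hFG]

lemma main1' (x : V) :
    (TensorProduct.assoc ℚ V V V) ((TensorProduct.map deltaL LinearMap.id) (deltaL x)) =
      (TensorProduct.map LinearMap.id (deltaL + deltaR)) (deltaL x) := by
  have := ext_all
    (F := (TensorProduct.assoc ℚ V V V).toLinearMap ∘ₗ
        TensorProduct.map deltaL LinearMap.id ∘ₗ deltaL)
    (G := TensorProduct.map LinearMap.id (deltaL + deltaR) ∘ₗ deltaL)
    (fun u => by simpa using main1 u) x
  simpa using this

lemma main2' (x : V) :
    (TensorProduct.assoc ℚ V V V) ((TensorProduct.map deltaR LinearMap.id) (deltaL x)) =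
      (TensorProduct.map LinearMap.id deltaL) (deltaR x) := by
  have := ext_all
    (F := (TensorProduct.assoc ℚ V V V).toLinearMap ∘ₗ
        TensorProduct.map deltaR LinearMap.id ∘ₗ deltaL)
    (G := TensorProduct.map LinearMap.id deltaL ∘ₗ deltaR)
    (fun u => by simpa using main2 u) x
  simpa using this

lemma main3' (x : V) :
    (TensorProduct.assoc ℚ V V V)
        ((TensorProduct.map (deltaL + deltaR) LinearMap.id) (deltaR x)) =
      (TensorProduct.map LinearMap.id deltaR) (deltaR x) := by
  have := ext_all
    (F := (TensorProduct.assoc ℚ V V V).toLinearMap ∘ₗ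
        TensorProduct.map (deltaL + deltaR) LinearMap.id ∘ₗ deltaR)
    (G := TensorProduct.map LinearMap.id deltaR ∘ₗ deltaR)
    (fun u => by simpa using main3 u) x
  simpa using this

lemma main4' (x : V) :
    (TensorProduct.assoc ℚ V V V)
        ((TensorProduct.map (deltaL + deltaR) LinearMap.id) ((deltaL + deltaR) x)) =
      (TensorProduct.map LinearMap.id (deltaL + deltaR)) ((deltaL + deltaR) x) := by
  have e1 := main1' x
  have e2 := main2' x
  have e3 := main3' x
  simp only [LinearMap.add_apply, map_add, TensorProduct.map_add_left,
    TensorProduct.map_add_right] at e1 e2 e3 ⊢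
  rw [e1, e2, ← e3]
  abel

theorem WQSym_codendriform :
    ∀ x ∈ Wplus,
      ((TensorProduct.assoc ℚ V V V)
          ((TensorProduct.map deltaL LinearMap.id) (deltaL x)) =
        (TensorProduct.map LinearMap.id (deltaL + deltaR)) (deltaL x)) ∧
      ((TensorProduct.assoc ℚ V V V)
          ((TensorProduct.map deltaR LinearMap.id) (deltaL x)) =
        (TensorProduct.map LinearMap.id deltaL) (deltaR x)) ∧
      ((TensorProduct.assoc ℚ V V V)
          ((TensorProduct.map (deltaL + deltaR) LinearMap.id) (deltaR x)) =
        (TensorProduct.map LinearMap.id deltaR) (deltaR x)) ∧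
      ((TensorProduct.assoc ℚ V V V)
          ((TensorProduct.map (deltaL + deltaR) LinearMap.id) ((deltaL + deltaR) x)) =
        (TensorProduct.map LinearMap.id (deltaL + deltaR)) ((deltaL + deltaR) x)) := by
  intro x _
  exact ⟨main1' x, main2' x, main3' x, main4' x⟩
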